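/- Let X = Spec k[ℳ] be a seminormal and S_2 toric variety which is not normal, with non-normal locus C. Define the core of X as the intersection of the irreducible components of C. Then the core is a normal toric variety; combinatorially, if σ(Δ) = ⋂_{X_{τ_i} ⊆ C} τ_i (intersection over codimension-one cones τ_i of Δ whose subvarieties lie in C), then S_{σ(Δ)} = Λ ∩ σ(Δ) where Λ = S_{σ(Δ)} - S_{σ(Δ)}. -/

import Mathlib

open scoped BigOperators

/-- The convex cone generated by a set `s` in a real vector space. -/
def coneOf {V : Type} [AddCommGroup V] [Module ℝ V] (s : Set V) : Set V :=
  {x | ∃ (n : ℕ) (c : Fin n → ℝ) (v : Fin n → V),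
    (∀ i, 0 ≤ c i) ∧ (∀ i, v i ∈ s) ∧ x = ∑ i, c i • v i}

/-- `τ` is a face of the cone `σ`. -/
def IsFaceOf {V : Type} [AddCommGroup V] [Module ℝ V] (τ σ : Set V) : Prop :=
  τ ⊆ σ ∧ (0 : V) ∈ τ ∧ (∀ x ∈ τ, ∀ y ∈ τ, x + y ∈ τ) ∧
    (∀ x ∈ τ, ∀ c : ℝ, 0 ≤ c → c • x ∈ τ) ∧
    ∀ x ∈ σ, ∀ y ∈ σ, x + y ∈ τ → x ∈ τ ∧ y ∈ τ

/-- The dimension of the linear span of a set. -/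
noncomputable def coneDim {V : Type} [AddCommGroup V] [Module ℝ V] (s : Set V) : ℕ :=
  Module.finrank ℝ (Submodule.span ℝ s)

/-- `τ` is a codimension-one face of the cone `σ`. -/
def IsCodimOneFace {V : Type} [AddCommGroup V] [Module ℝ V] (τ σ : Set V) : Prop :=
  IsFaceOf τ σ ∧ coneDim τ + 1 = coneDim σ

/-- `M` is a (full) lattice in the real vector space `V`. -/
def IsLattice {V : Type} [AddCommGroup V] [Module ℝ V] (M : AddSubgroup V) : Prop :=
  ∃ (n : ℕ) (b : Fin n → V), LinearIndependent ℝ b ∧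
    Submodule.span ℝ (Set.range b) = ⊤ ∧ M = AddSubgroup.closure (Set.range b)

/-- The group of differences `A - A` of a set `A`. -/
def latticeOf {V : Type} [AddCommGroup V] (A : Set V) : Set V :=
  {x | ∃ a ∈ A, ∃ b ∈ A, x = a - b}

/-- The group of differences `(A ∩ σ) - (A ∩ σ)`. -/
def diffSet {V : Type} [AddCommGroup V] (A σ : Set V) : Set V :=
  {x | ∃ a ∈ A ∩ σ, ∃ b ∈ A ∩ σ, x = a - b}

/-- A monoidal complex `ℳ = (M, Δ, (S_σ)_{σ ∈ Δ})`: a fan `Δ` of polyhedral cones in the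
real vector space `V` together with compatible finitely generated semigroups
`S_σ ⊆ M ∩ σ` generating the cones. -/
structure MonoidalComplex (V : Type) [AddCommGroup V] [Module ℝ V] (M : AddSubgroup V) where
  cones : Set (Set V)
  sg : Set V → Set V
  cones_finite : cones.Finite
  face_mem : ∀ σ ∈ cones, ∀ τ : Set V, IsFaceOf τ σ → τ ∈ cones
  inter_face : ∀ σ ∈ cones, ∀ σ' ∈ cones, IsFaceOf (σ ∩ σ') σ
  sg_sub : ∀ σ ∈ cones, sg σ ⊆ (M : Set V) ∩ σ
  sg_zero : ∀ σ ∈ cones, (0 : V) ∈ sg σ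
  sg_add : ∀ σ ∈ cones, ∀ x ∈ sg σ, ∀ y ∈ sg σ, x + y ∈ sg σ
  sg_face : ∀ σ ∈ cones, ∀ τ : Set V, IsFaceOf τ σ → sg τ = sg σ ∩ τ
  sg_gen : ∀ σ ∈ cones, coneOf (sg σ) = σ
  sg_fg : ∀ σ ∈ cones, ∃ t : Finset V, (↑t : Set V) ⊆ sg σ ∧
    sg σ ⊆ (AddSubmonoid.closure (↑t : Set V) : Set V)

namespace MonoidalComplex

variable {V : Type} [AddCommGroup V] [Module ℝ V] {M : AddSubgroup V}

/-- A facet is a maximal cone of the fan. -/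
def IsFacet (𝓜 : MonoidalComplex V M) (F : Set V) : Prop :=
  F ∈ 𝓜.cones ∧ ∀ σ ∈ 𝓜.cones, F ⊆ σ → σ = F

/-- A cone of `Δ` of codimension one. -/
def IsCodimOneCone (𝓜 : MonoidalComplex V M) (τ : Set V) : Prop :=
  τ ∈ 𝓜.cones ∧ ∃ F, 𝓜.IsFacet F ∧ IsCodimOneFace τ F

/-- The fan of `𝓜` is 1-connected: any two distinct facets `F ≠ F'` are joined by a chain of
facets containing `F ∩ F'`, consecutive members meeting in a common codimension-one face. -/
def OneConnected (𝓜 : MonoidalComplex V M) : Prop :=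
  ∀ F F' : Set V, 𝓜.IsFacet F → 𝓜.IsFacet F' → F ≠ F' →
    ∃ (n : ℕ) (c : ℕ → Set V), c 0 = F ∧ c n = F' ∧
      (∀ i ≤ n, 𝓜.IsFacet (c i) ∧ F ∩ F' ⊆ c i) ∧
      ∀ i < n, IsCodimOneFace (c i ∩ c (i + 1)) (c i) ∧
        IsCodimOneFace (c i ∩ c (i + 1)) (c (i + 1))

/-- `X = Spec k[ℳ]` satisfies Serre's condition `S_2`: every collection of functions on the
irreducible components which is regular in codimension one and compatible along the
invariant codimension-one subvarieties is the restriction of a global regular function. -/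
def IsS2 (k : Type) [Field k] (𝓜 : MonoidalComplex V M) : Prop :=
  ∀ f : Set V → (V →₀ k),
    (∀ F, 𝓜.IsFacet F → ∀ m, f F m ≠ 0 → ∃ s ∈ 𝓜.sg F, ∃ t ∈ 𝓜.sg F, m = s - t) →
    (∀ τ, 𝓜.IsCodimOneCone τ → ∀ F, 𝓜.IsFacet F → τ ⊆ F →
      ∀ m, f F m ≠ 0 → ∃ s ∈ 𝓜.sg F, ∃ t ∈ 𝓜.sg τ, m = s - t) →
    (∀ τ, 𝓜.IsCodimOneCone τ → ∀ F F', 𝓜.IsFacet F → 𝓜.IsFacet F' → τ ⊆ F → τ ⊆ F' →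
      ∀ m, (∃ s ∈ 𝓜.sg τ, ∃ t ∈ 𝓜.sg τ, m = s - t) → f F m = f F' m) →
    ∃ g : V →₀ k, (∀ m, g m ≠ 0 → ∃ σ ∈ 𝓜.cones, m ∈ 𝓜.sg σ) ∧
      ∀ F, 𝓜.IsFacet F → ∀ m : V, (m ∈ 𝓜.sg F → f F m = g m) ∧ (m ∉ 𝓜.sg F → f F m = 0)

end MonoidalComplex

namespace MonoidalComplex

variable {V : Type} [AddCommGroup V] [Module ℝ V] {M : AddSubgroup V}

/-- `X_σ` lies in the non-normal locus of `X = Spec k[ℳ]`: either `σ` lies in at least two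
facets, or it lies in a unique facet `F` and `S_σ - S_σ` is strictly smaller than the
corresponding lattice of the normalization `Spec k[(S_F - S_F) ∩ F]`. -/
def NonNormalCone (𝓜 : MonoidalComplex V M) (σ : Set V) : Prop :=
  σ ∈ 𝓜.cones ∧
    ((∃ F F', 𝓜.IsFacet F ∧ 𝓜.IsFacet F' ∧ F ≠ F' ∧ σ ⊆ F ∧ σ ⊆ F') ∨
     (∃ F, 𝓜.IsFacet F ∧ σ ⊆ F ∧
        latticeOf (𝓜.sg σ) ⊂ latticeOf (latticeOf (𝓜.sg F) ∩ σ)))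

end MonoidalComplex


section Helpers

open Set

variable {V : Type} [NormedAddCommGroup V] [NormedSpace ℝ V] [FiniteDimensional ℝ V]
  {M : AddSubgroup V}

lemma mem_coneOf_of_mem {s : Set V} {x : V} (hx : x ∈ s) : x ∈ coneOf s :=
  ⟨1, fun _ => 1, fun _ => x, fun _ => zero_le_one, fun _ => hx, by simp⟩

lemma coneOf_zero (s : Set V) : (0 : V) ∈ coneOf s :=
  ⟨0, fun i => 0, fun i => 0, fun i => le_rfl, fun i => i.elim0, by simp⟩

lemma coneOf_add {s : Set V} {x y : V} (hx : x ∈ coneOf s) (hy : y ∈ coneOf s) :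
    x + y ∈ coneOf s := by
  obtain ⟨n, c, v, hc, hv, rfl⟩ := hx
  obtain ⟨n', c', v', hc', hv', rfl⟩ := hy
  refine ⟨n + n', Fin.append c c', Fin.append v v', ?_, ?_, ?_⟩
  · intro i
    refine Fin.addCases (fun j => ?_) (fun j => ?_) i
    · rw [Fin.append_left]; exact hc j
    · rw [Fin.append_right]; exact hc' j
  · intro i
    refine Fin.addCases (fun j => ?_) (fun j => ?_) i
    · rw [Fin.append_left]; exact hv j
    · rw [Fin.append_right]; exact hv' j
  · rw [Fin.sum_univ_add]
    simp only [Fin.append_left, Fin.append_right]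

lemma coneOf_smul {s : Set V} {x : V} {c : ℝ} (hc : 0 ≤ c) (hx : x ∈ coneOf s) :
    c • x ∈ coneOf s := by
  obtain ⟨n, co, v, hco, hv, rfl⟩ := hx
  exact ⟨n, fun i => c * co i, v, fun i => mul_nonneg hc (hco i), hv, by
    rw [Finset.smul_sum]; simp [mul_smul]⟩

lemma coneOf_mono {s s' : Set V} (h : s ⊆ s') : coneOf s ⊆ coneOf s' := by
  rintro x ⟨n, c, v, hc, hv, rfl⟩
  exact ⟨n, c, v, hc, fun i => h (hv i), rfl⟩

lemma coneOf_subset_submodule {s : Set V} {p : Submodule ℝ V} (h : s ⊆ (p : Set V)) :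
    coneOf s ⊆ (p : Set V) := by
  rintro x ⟨n, c, v, hc, hv, rfl⟩
  exact Submodule.sum_mem p fun i _ => p.smul_mem _ (h (hv i))

namespace MonoidalComplex

variable (𝓜 : MonoidalComplex V M) {σ τ : Set V}

lemma sg_subset_cone (hσ : σ ∈ 𝓜.cones) : 𝓜.sg σ ⊆ σ := fun x hx =>
  ((𝓜.sg_sub σ hσ) hx).2

lemma cone_zero (hσ : σ ∈ 𝓜.cones) : (0 : V) ∈ σ :=
  𝓜.sg_subset_cone hσ (𝓜.sg_zero σ hσ)

lemma cone_add (hσ : σ ∈ 𝓜.cones) {x y : V} (hx : x ∈ σ) (hy : y ∈ σ) : x + y ∈ σ := by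
  have h := 𝓜.sg_gen σ hσ
  rw [← h] at hx hy ⊢
  exact coneOf_add hx hy

lemma cone_smul (hσ : σ ∈ 𝓜.cones) {x : V} {c : ℝ} (hc : 0 ≤ c) (hx : x ∈ σ) : c • x ∈ σ := by
  have h := 𝓜.sg_gen σ hσ
  rw [← h] at hx ⊢
  exact coneOf_smul hc hx

lemma cone_convex (hσ : σ ∈ 𝓜.cones) : Convex ℝ σ := by
  intro x hx y hy a b ha hb hab
  exact 𝓜.cone_add hσ (𝓜.cone_smul hσ ha hx) (𝓜.cone_smul hσ hb hy)

lemma faceOf_self (hσ : σ ∈ 𝓜.cones) : IsFaceOf σ σ :=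
  ⟨subset_rfl, 𝓜.cone_zero hσ, fun x hx y hy => 𝓜.cone_add hσ hx hy,
    fun x hx c hc => 𝓜.cone_smul hσ hc hx, fun x hx y hy _ => ⟨hx, hy⟩⟩

lemma faceOf_of_subset (hτ : τ ∈ 𝓜.cones) (hσ : σ ∈ 𝓜.cones) (h : τ ⊆ σ) : IsFaceOf τ σ := by
  have := 𝓜.inter_face σ hσ τ hτ
  rwa [Set.inter_eq_right.mpr h] at this

lemma sg_eq_of_subset (hτ : τ ∈ 𝓜.cones) (hσ : σ ∈ 𝓜.cones) (h : τ ⊆ σ) :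
    𝓜.sg τ = 𝓜.sg σ ∩ τ :=
  𝓜.sg_face σ hσ τ (𝓜.faceOf_of_subset hτ hσ h)

lemma sg_mono (hτ : τ ∈ 𝓜.cones) (hσ : σ ∈ 𝓜.cones) (h : τ ⊆ σ) : 𝓜.sg τ ⊆ 𝓜.sg σ := by
  rw [𝓜.sg_eq_of_subset hτ hσ h]; exact Set.inter_subset_left

lemma sg_nsmul (hσ : σ ∈ 𝓜.cones) {x : V} (hx : x ∈ 𝓜.sg σ) (N : ℕ) : N • x ∈ 𝓜.sg σ := by
  induction N with
  | zero => simpa using 𝓜.sg_zero σ hσ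
  | succ n ih => rw [succ_nsmul]; exact 𝓜.sg_add σ hσ _ ih _ hx

end MonoidalComplex

lemma latticeOf_mono {A B : Set V} (h : A ⊆ B) : latticeOf A ⊆ latticeOf B := by
  rintro x ⟨a, ha, b, hb, rfl⟩
  exact ⟨a, h ha, b, h hb, rfl⟩

lemma mem_latticeOf_of_mem {A : Set V} (h0 : (0 : V) ∈ A) {a : V} (ha : a ∈ A) :
    a ∈ latticeOf A := ⟨a, ha, 0, h0, (sub_zero a).symm⟩

lemma sub_mem_latticeOf {A : Set V} {a b : V} (ha : a ∈ A) (hb : b ∈ A) :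
    a - b ∈ latticeOf A := ⟨a, ha, b, hb, rfl⟩

lemma exists_sub_of_mem_span (𝓜 : MonoidalComplex V M) {σ : Set V} (hσ : σ ∈ 𝓜.cones) {x : V}
    (hx : x ∈ Submodule.span ℝ σ) : ∃ p ∈ σ, ∃ q ∈ σ, x = p - q := by
  induction hx using Submodule.span_induction with
  | mem y hy => exact ⟨y, hy, 0, 𝓜.cone_zero hσ, (sub_zero y).symm⟩
  | zero => exact ⟨0, 𝓜.cone_zero hσ, 0, 𝓜.cone_zero hσ, by simp⟩
  | add y z hy hz ihy ihz =>
      obtain ⟨p, hp, q, hq, rfl⟩ := ihy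
      obtain ⟨p', hp', q', hq', rfl⟩ := ihz
      exact ⟨p + p', 𝓜.cone_add hσ hp hp', q + q', 𝓜.cone_add hσ hq hq', by abel⟩
  | smul c y hy ih =>
      obtain ⟨p, hp, q, hq, rfl⟩ := ih
      rcases le_total 0 c with hc | hc
      · exact ⟨c • p, 𝓜.cone_smul hσ hc hp, c • q, 𝓜.cone_smul hσ hc hq, by
          rw [smul_sub]⟩
      · refine ⟨(-c) • q, 𝓜.cone_smul hσ (neg_nonneg.mpr hc) hq,
          (-c) • p, 𝓜.cone_smul hσ (neg_nonneg.mpr hc) hp, ?_⟩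
        rw [smul_sub]
        module

end Helpers
section Helpers2

set_option linter.unusedSectionVars false
set_option linter.unusedVariables false

open Set

variable {V : Type} [NormedAddCommGroup V] [NormedSpace ℝ V] [FiniteDimensional ℝ V]
  {M : AddSubgroup V}

/-- `x` has a relatively open neighbourhood (w.r.t. the linear span) inside `σ`. -/
def BallPt (σ : Set V) (x : V) : Prop :=
  ∃ ε : ℝ, 0 < ε ∧ ∀ w ∈ Submodule.span ℝ σ, ‖w‖ < ε → x + w ∈ σ

/-- A point with the ball property lies in the intrinsic interior. -/
lemma BallPt.mem_intrinsicInterior {σ : Set V} {x : V} (hx : x ∈ σ) (hb : BallPt σ x) :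
    x ∈ intrinsicInterior ℝ σ := by
  obtain ⟨ε, hε, hball⟩ := hb
  refine ⟨⟨x, subset_affineSpan ℝ σ hx⟩, ?_, rfl⟩
  have hopen : IsOpen ((Subtype.val : affineSpan ℝ σ → V) ⁻¹' Metric.ball x ε) :=
    Metric.isOpen_ball.preimage continuous_subtype_val
  refine interior_maximal ?_ hopen ?_
  · rintro u hu
    have hdir : (u : V) - x ∈ Submodule.span ℝ σ := by
      have h1 : (u : V) -ᵥ x ∈ (affineSpan ℝ σ).direction :=
        AffineSubspace.vsub_mem_direction u.2 (subset_affineSpan ℝ σ hx)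
      rw [direction_affineSpan] at h1
      have h2 : vectorSpan ℝ σ ≤ Submodule.span ℝ σ := by
        rw [vectorSpan_def]
        refine Submodule.span_le.mpr ?_
        rintro y ⟨a, ha, b, hb, rfl⟩
        exact sub_mem (Submodule.subset_span ha) (Submodule.subset_span hb)
      exact h2 h1
    have hnorm : ‖(u : V) - x‖ < ε := by
      have := hu
      simp only [Set.mem_preimage, Metric.mem_ball, dist_eq_norm] at this
      exact this
    have := hball _ hdir hnorm
    simpa using this
  · simp [Metric.mem_ball, hε]

/-- A point of `σ` in the interior of `σ` within the subtype of the span has the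
ball property. -/
lemma ballPt_of_mem_interior_span {σ : Set V} {x : V} (hxs : x ∈ Submodule.span ℝ σ)
    (h : (⟨x, hxs⟩ : Submodule.span ℝ σ) ∈
      interior ((Subtype.val : Submodule.span ℝ σ → V) ⁻¹' σ)) : BallPt σ x := by
  rw [mem_interior_iff_mem_nhds, Metric.mem_nhds_iff] at h
  obtain ⟨ε, hε, hball⟩ := h
  refine ⟨ε, hε, fun w hw hwn => ?_⟩
  have hmem : (⟨x + w, Submodule.add_mem _ hxs hw⟩ : Submodule.span ℝ σ) ∈
      Metric.ball (⟨x, hxs⟩ : Submodule.span ℝ σ) ε := by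
    rw [Metric.mem_ball, Subtype.dist_eq]
    simpa [dist_eq_norm] using hwn
  exact hball hmem

/-- Conversely, the ball property gives interior membership in the span subtype. -/
lemma mem_interior_span_of_ballPt {σ : Set V} {x : V} (hxs : x ∈ Submodule.span ℝ σ)
    (hb : BallPt σ x) : (⟨x, hxs⟩ : Submodule.span ℝ σ) ∈
      interior ((Subtype.val : Submodule.span ℝ σ → V) ⁻¹' σ) := by
  obtain ⟨ε, hε, hball⟩ := hb
  have hopen : IsOpen ((Subtype.val : Submodule.span ℝ σ → V) ⁻¹' Metric.ball x ε) :=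
    Metric.isOpen_ball.preimage continuous_subtype_val
  refine interior_maximal ?_ hopen ?_
  · rintro u hu
    have hdir : (u : V) - x ∈ Submodule.span ℝ σ := sub_mem u.2 hxs
    have hnorm : ‖(u : V) - x‖ < ε := by
      simpa [dist_eq_norm] using hu
    have := hball _ hdir hnorm
    simpa using this
  · simp [Metric.mem_ball, hε]

end Helpers2
section Helpers3

set_option linter.unusedSectionVars false
set_option linter.unusedVariables false

open Set

variable {V : Type} [NormedAddCommGroup V] [NormedSpace ℝ V] [FiniteDimensional ℝ V]
  {M : AddSubgroup V}

namespace MonoidalComplex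

variable (𝓜 : MonoidalComplex V M) {σ τ : Set V}

lemma span_eq_span_gens (hσ : σ ∈ 𝓜.cones) {t : Finset V} (ht1 : (↑t : Set V) ⊆ 𝓜.sg σ)
    (ht2 : 𝓜.sg σ ⊆ (AddSubmonoid.closure (↑t : Set V) : Set V)) :
    Submodule.span ℝ ((↑t : Set V)) = Submodule.span ℝ σ := by
  apply le_antisymm
  · exact Submodule.span_mono (fun x hx => 𝓜.sg_subset_cone hσ (ht1 hx))
  · rw [Submodule.span_le]
    have hsg : 𝓜.sg σ ⊆ (Submodule.span ℝ ((↑t : Set V)) : Set V) := by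
      intro x hx
      have := ht2 hx
      have hle : AddSubmonoid.closure (↑t : Set V) ≤
          (Submodule.span ℝ ((↑t : Set V))).toAddSubmonoid :=
        AddSubmonoid.closure_le.mpr (fun y hy => Submodule.subset_span hy)
      exact hle this
    have : σ ⊆ (Submodule.span ℝ ((↑t : Set V)) : Set V) := by
      rw [← 𝓜.sg_gen σ hσ]
      exact coneOf_subset_submodule hsg
    exact this

/-- Every cone of the complex contains a lattice point in its relative interior. -/
lemma exists_sg_ballPt (hσ : σ ∈ 𝓜.cones) : ∃ z, z ∈ 𝓜.sg σ ∧ BallPt σ z := by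
  obtain ⟨t, ht1, ht2⟩ := 𝓜.sg_fg σ hσ
  classical
  -- the candidate point
  set z : V := ∑ v ∈ t, v with hz
  have hzsg : z ∈ 𝓜.sg σ := by
    refine Finset.sum_induction _ (· ∈ 𝓜.sg σ) (fun a b ha hb => 𝓜.sg_add σ hσ a ha b hb)
      (𝓜.sg_zero σ hσ) (fun v hv => ht1 hv)
  -- the linear map from coefficients
  let φ : ({x // x ∈ t} → ℝ) →ₗ[ℝ] V :=
    { toFun := fun c => ∑ i : {x // x ∈ t}, c i • (i : V)
      map_add' := by intro a b; simp [add_smul, Finset.sum_add_distrib]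
      map_smul' := by intro r a; simp [smul_smul, Finset.smul_sum]
    }
  have hφmem : ∀ c, φ c ∈ Submodule.span ℝ ((↑t : Set V)) := by
    intro c
    exact Submodule.sum_mem _ fun i _ => Submodule.smul_mem _ _ (Submodule.subset_span i.2)
  let ψ : ({x // x ∈ t} → ℝ) →ₗ[ℝ] Submodule.span ℝ ((↑t : Set V)) :=
    φ.codRestrict _ hφmem
  have hψsurj : Function.Surjective ψ := by
    rintro ⟨y, hy⟩
    have hrange : Submodule.span ℝ ((↑t : Set V)) ≤ LinearMap.range φ := by
      rw [Submodule.span_le]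
      intro v hv
      refine ⟨fun j => if j = ⟨v, hv⟩ then 1 else 0, ?_⟩
      show ∑ i : {x // x ∈ t}, (if i = ⟨v, hv⟩ then (1:ℝ) else 0) • (i : V) = v
      rw [Finset.sum_eq_single (⟨v, hv⟩ : {x // x ∈ t})]
      · simp
      · intro b _ hb; simp [hb]
      · intro h; exact absurd (Finset.mem_univ _) h
    obtain ⟨c, hc⟩ := hrange hy
    exact ⟨c, Subtype.ext hc⟩
  let ψc := LinearMap.toContinuousLinearMap ψ
  have hopen : IsOpenMap ψc := ContinuousLinearMap.isOpenMap ψc hψsurj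
  have h0 : (0 : Submodule.span ℝ ((↑t : Set V))) ∈ ψc '' Metric.ball 0 1 := by
    exact ⟨0, by simp, by simp⟩
  obtain ⟨ε, hε, hball⟩ := Metric.isOpen_iff.mp (hopen _ Metric.isOpen_ball) _ h0
  refine ⟨z, hzsg, ε, hε, ?_⟩
  intro w hw hwn
  rw [← 𝓜.span_eq_span_gens hσ ht1 ht2] at hw
  have hwball : (⟨w, hw⟩ : Submodule.span ℝ ((↑t : Set V))) ∈ ψc '' Metric.ball 0 1 := by
    apply hball
    rw [Metric.mem_ball, dist_zero_right]
    simpa using hwn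
  obtain ⟨c, hc1, hc2⟩ := hwball
  have hcw : φ c = w := congrArg Subtype.val hc2
  have hcsmall : ∀ i, |c i| < 1 := by
    intro i
    have h1 : ‖c‖ < 1 := by simpa [dist_zero_right] using hc1
    exact lt_of_le_of_lt (by simpa using norm_le_pi_norm c i) h1
  -- z + w as a nonnegative combination of the generators
  have hzw : z + w = ∑ i : {x // x ∈ t}, (1 + c i) • (i : V) := by
    rw [← hcw]
    have hz2 : z = ∑ i : {x // x ∈ t}, (i : V) := by
      rw [hz, ← Finset.sum_coe_sort t (fun v => v)]
    rw [hz2]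
    show ∑ i : {x // x ∈ t}, (i : V) + ∑ i : {x // x ∈ t}, c i • (i : V) = _
    rw [← Finset.sum_add_distrib]
    congr 1
    ext i
    rw [add_smul, one_smul]
  have hmem : z + w ∈ coneOf ((↑t : Set V)) := by
    rw [hzw]
    refine Finset.sum_induction _ (· ∈ coneOf ((↑t : Set V)))
      (fun a b ha hb => coneOf_add ha hb) (coneOf_zero _) (fun i _ => ?_)
    exact coneOf_smul (by nlinarith [abs_lt.mp (hcsmall i)]) (mem_coneOf_of_mem i.2)
  have : coneOf ((↑t : Set V)) ⊆ σ := by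
    rw [← 𝓜.sg_gen σ hσ]
    exact coneOf_mono ht1
  exact this hmem

end MonoidalComplex

end Helpers3
section Helpers4

set_option linter.unusedSectionVars false
set_option linter.unusedVariables false

open Set

variable {V : Type} [NormedAddCommGroup V] [NormedSpace ℝ V] [FiniteDimensional ℝ V]
  {M : AddSubgroup V}

namespace MonoidalComplex

variable (𝓜 : MonoidalComplex V M) {σ : Set V}

/-- Supporting functional at a non-relatively-interior point of a cone of the complex. -/
lemma exists_supporting (hσ : σ ∈ 𝓜.cones) {x : V} (hx : x ∈ σ)
    (hnot : x ∉ intrinsicInterior ℝ σ) :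
    ∃ f : V →ₗ[ℝ] ℝ, (∀ y ∈ σ, 0 ≤ f y) ∧ f x = 0 ∧ ∃ y ∈ σ, 0 < f y := by
  classical
  set W := Submodule.span ℝ σ with hW
  set S : Set W := (Subtype.val : W → V) ⁻¹' σ with hS
  have hconv : Convex ℝ S := (𝓜.cone_convex hσ).linear_preimage W.subtype
  obtain ⟨z, hzsg, hzball⟩ := 𝓜.exists_sg_ballPt hσ
  have hzσ : z ∈ σ := 𝓜.sg_subset_cone hσ hzsg
  have hzW : z ∈ W := Submodule.subset_span hzσ
  have hzint : (⟨z, hzW⟩ : W) ∈ interior S := mem_interior_span_of_ballPt hzW hzball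
  have hxW : x ∈ W := Submodule.subset_span hx
  have hxnotint : (⟨x, hxW⟩ : W) ∉ interior S := by
    intro h
    exact hnot (BallPt.mem_intrinsicInterior hx (ballPt_of_mem_interior_span hxW h))
  obtain ⟨g, hg⟩ := geometric_hahn_banach_open_point (hconv.interior) isOpen_interior hxnotint
  -- every point of S has value at most g x
  have hle : ∀ y : W, y ∈ S → g y ≤ g ⟨x, hxW⟩ := by
    intro y hy
    by_contra hgt
    push_neg at hgt
    set A := g ⟨z, hzW⟩ with hA
    set B := g y with hB
    set X := g ⟨x, hxW⟩ with hX
    set θ : ℝ := min (1/2) ((B - X) / (2 * (|A - B| + 1))) with hθ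
    have habs : (0:ℝ) < |A - B| + 1 := by positivity
    have hBX : 0 < B - X := by linarith
    have hθpos : 0 < θ := lt_min (by norm_num) (by positivity)
    have hθhalf : θ ≤ 1/2 := min_le_left _ _
    have hθ3 : θ * (|A - B| + 1) ≤ (B - X) / 2 := by
      have h1 : θ ≤ (B - X) / (2 * (|A - B| + 1)) := min_le_right _ _
      calc θ * (|A - B| + 1) ≤ (B - X) / (2 * (|A - B| + 1)) * (|A - B| + 1) := by
            exact mul_le_mul_of_nonneg_right h1 (by positivity)
        _ = (B - X) / 2 := by field_simp
    have hcombo : θ • (⟨z, hzW⟩ : W) + (1 - θ) • y ∈ interior S :=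
      hconv.combo_interior_closure_mem_interior hzint (subset_closure hy) hθpos
        (by linarith) (by ring)
    have hlt := hg _ hcombo
    rw [map_add, map_smul, map_smul] at hlt
    have habs1 : A - B ≤ |A - B| := le_abs_self _
    have habs2 : -(|A - B|) ≤ A - B := neg_abs_le _
    have : θ * A + (1 - θ) * B - X = (B - X) + θ * (A - B) := by ring
    simp only [smul_eq_mul] at hlt
    nlinarith
  -- g x = 0 by the cone structure
  have h0S : (0 : W) ∈ S := by
    simpa [hS] using 𝓜.cone_zero hσ
  have hge0 : 0 ≤ g ⟨x, hxW⟩ := by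
    have := hle 0 h0S
    simpa using this
  have hle0 : g ⟨x, hxW⟩ ≤ 0 := by
    have h2x : ((2:ℝ) • (⟨x, hxW⟩ : W)) ∈ S := by
      simp only [hS, Set.mem_preimage, SetLike.val_smul]
      exact 𝓜.cone_smul hσ (by norm_num) hx
    have := hle _ h2x
    rw [map_smul] at this
    simp only [smul_eq_mul] at this
    linarith
  have hgx0 : g ⟨x, hxW⟩ = 0 := le_antisymm hle0 hge0
  have hzlt : g ⟨z, hzW⟩ < 0 := by
    have := hg _ hzint
    rwa [hgx0] at this
  -- extend to all of V
  obtain ⟨W', hcompl⟩ := Submodule.exists_isCompl W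
  set π : V →ₗ[ℝ] W := W.projectionOnto W' hcompl with hπ
  refine ⟨-((g : W →ₗ[ℝ] ℝ).comp π), ?_, ?_, ⟨z, hzσ, ?_⟩⟩
  · intro y hy
    have hyW : y ∈ W := Submodule.subset_span hy
    have hproj : π y = ⟨y, hyW⟩ := by
      simpa using Submodule.projectionOnto_apply_left hcompl ⟨y, hyW⟩
    have hyle : g ⟨y, hyW⟩ ≤ 0 := by
      have := hle ⟨y, hyW⟩ (by simpa [hS] using hy)
      rwa [hgx0] at this
    simp only [LinearMap.neg_apply, LinearMap.comp_apply, hproj, ContinuousLinearMap.coe_coe]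
    linarith
  · have hproj : π x = ⟨x, hxW⟩ := by
      simpa using Submodule.projectionOnto_apply_left hcompl ⟨x, hxW⟩
    simp only [LinearMap.neg_apply, LinearMap.comp_apply, hproj, ContinuousLinearMap.coe_coe]
    simpa using hgx0
  · have hproj : π z = ⟨z, hzW⟩ := by
      simpa using Submodule.projectionOnto_apply_left hcompl ⟨z, hzW⟩
    simp only [LinearMap.neg_apply, LinearMap.comp_apply, hproj, ContinuousLinearMap.coe_coe]
    linarith

end MonoidalComplex

end Helpers4
section Helpers5

set_option linter.unusedSectionVars false
set_option linter.unusedVariables false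

open Set

variable {V : Type} [NormedAddCommGroup V] [NormedSpace ℝ V] [FiniteDimensional ℝ V]
  {M : AddSubgroup V}

namespace MonoidalComplex

variable (𝓜 : MonoidalComplex V M)

/-- The key `R_1`-type step: if `τ` is a normal codimension-one face of the facet `F`, then
any lattice point of `F` lying on the cone `F` can be moved into `S_F` by an element
of `S_τ`. -/
lemma hard_step
    (hsn : ∀ σ ∈ 𝓜.cones, ∀ m : V, m ∈ 𝓜.sg σ ↔ ∃ τ : Set V, IsFaceOf τ σ ∧
      m ∈ latticeOf (𝓜.sg τ) ∩ intrinsicInterior ℝ τ)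
    {F τ : Set V} (hFc : F ∈ 𝓜.cones) (hτc : τ ∈ 𝓜.cones)
    (hface : IsCodimOneFace τ F)
    (hnorm : latticeOf (𝓜.sg τ) = latticeOf (latticeOf (𝓜.sg F) ∩ τ))
    {m : V} (hm1 : m ∈ latticeOf (𝓜.sg F)) (hm2 : m ∈ F) :
    ∃ t ∈ 𝓜.sg τ, m + t ∈ 𝓜.sg F := by
  obtain ⟨p, hp, q, hq, hmpq⟩ := hm1
  obtain ⟨t₀, ht₀sg, ε₀, hε₀, hball⟩ := 𝓜.exists_sg_ballPt hτc
  have hτF : τ ⊆ F := hface.1.1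
  have ht₀τ : t₀ ∈ τ := 𝓜.sg_subset_cone hτc ht₀sg
  have hsgτF : 𝓜.sg τ ⊆ 𝓜.sg F := 𝓜.sg_mono hτc hFc hτF
  by_cases hms : m ∈ Submodule.span ℝ τ
  · -- Case A : `m` lies in the span of `τ`; push deep into the relative interior of `τ`.
    obtain ⟨p', hp', q', hq', hm'⟩ := exists_sub_of_mem_span 𝓜 hτc hms
    obtain ⟨N, hN⟩ := exists_nat_gt (max (‖q'‖ / ε₀) 0)
    have hN0 : (0:ℝ) < N := lt_of_le_of_lt (le_max_right _ _) hN
    have hNq : ‖q'‖ / ε₀ < N := lt_of_le_of_lt (le_max_left _ _) hN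
    have hNq' : ‖q'‖ < N * ε₀ := by
      rw [div_lt_iff₀ hε₀] at hNq; linarith
    set x : V := m + (N:ℝ) • t₀ with hx
    have hxball : BallPt τ x := by
      refine ⟨N * ε₀ - ‖q'‖, by linarith, fun w hw hwn => ?_⟩
      have hq's : q' ∈ Submodule.span ℝ τ := Submodule.subset_span hq'
      have hinner : t₀ + (N:ℝ)⁻¹ • (w - q') ∈ τ := by
        apply hball
        · exact Submodule.smul_mem _ _ (sub_mem hw hq's)
        · rw [norm_smul]
          have h1 : ‖w - q'‖ ≤ ‖w‖ + ‖q'‖ := norm_sub_le _ _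
          have h2 : ‖w‖ + ‖q'‖ < N * ε₀ := by linarith
          have h3 : ‖(N:ℝ)⁻¹‖ = (N:ℝ)⁻¹ := by
            rw [Real.norm_eq_abs, abs_of_pos (by positivity)]
          rw [h3]
          have h4 : ‖w - q'‖ < N * ε₀ := by linarith
          calc (N:ℝ)⁻¹ * ‖w - q'‖ < (N:ℝ)⁻¹ * (N * ε₀) :=
                mul_lt_mul_of_pos_left h4 (by positivity)
            _ = ε₀ := by field_simp
      have heq : x + w = p' + (N:ℝ) • (t₀ + (N:ℝ)⁻¹ • (w - q')) := by
        rw [hx, hm']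
        rw [smul_add, smul_smul, mul_inv_cancel₀ (ne_of_gt hN0), one_smul]
        abel
      rw [heq]
      exact 𝓜.cone_add hτc hp' (𝓜.cone_smul hτc (le_of_lt hN0) hinner)
    have hxτ : x ∈ τ := by
      obtain ⟨δ, hδ, hb⟩ := hxball
      simpa using hb 0 (Submodule.zero_mem _) (by simpa using hδ)
    have hxint : x ∈ intrinsicInterior ℝ τ := BallPt.mem_intrinsicInterior hxτ hxball
    have hxlatF : x ∈ latticeOf (𝓜.sg F) := by
      refine ⟨p + (N:ℝ) • t₀, ?_, q, hq, by rw [hx, hmpq]; abel⟩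
      have : (N:ℝ) • t₀ = N • t₀ := Nat.cast_smul_eq_nsmul ℝ N t₀
      rw [this]
      exact 𝓜.sg_add F hFc p hp _ (hsgτF (𝓜.sg_nsmul hτc ht₀sg N))
    have hxlatτ : x ∈ latticeOf (𝓜.sg τ) := by
      rw [hnorm]
      refine mem_latticeOf_of_mem ?_ ⟨hxlatF, hxτ⟩
      exact ⟨⟨0, 𝓜.sg_zero F hFc, 0, 𝓜.sg_zero F hFc, by simp⟩, 𝓜.cone_zero hτc⟩
    have hxsg : x ∈ 𝓜.sg F := (hsn F hFc x).mpr ⟨τ, hface.1, ⟨hxlatτ, hxint⟩⟩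
    refine ⟨N • t₀, 𝓜.sg_nsmul hτc ht₀sg N, ?_⟩
    have : (N:ℝ) • t₀ = N • t₀ := Nat.cast_smul_eq_nsmul ℝ N t₀
    rw [← this]
    exact hxsg
  · -- Case B : `m` sticks out of the span of `τ`; then `m + t₀` is in the relative
    -- interior of `F`.
    set x : V := m + t₀ with hx
    have hxF : x ∈ F := 𝓜.cone_add hFc hm2 (hτF ht₀τ)
    have hxint : x ∈ intrinsicInterior ℝ F := by
      by_contra hnot
      obtain ⟨f, hf0, hfx, y₀, hy₀, hy₀pos⟩ := 𝓜.exists_supporting hFc hxF hnot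
      have hfm0 : 0 ≤ f m := hf0 m hm2
      have hft0 : 0 ≤ f t₀ := hf0 t₀ (hτF ht₀τ)
      have hsum : f m + f t₀ = 0 := by
        rw [← map_add, ← hx, hfx]
      have hfm : f m = 0 := by linarith
      have hft : f t₀ = 0 := by linarith
      have hfτ : ∀ y ∈ τ, f y = 0 := by
        intro y hy
        have hc : (0:ℝ) < ε₀ / (2 * (‖y‖ + 1)) := by positivity
        set c : ℝ := ε₀ / (2 * (‖y‖ + 1)) with hcdef
        have hwmem : -(c • y) ∈ Submodule.span ℝ τ :=
          neg_mem (Submodule.smul_mem _ _ (Submodule.subset_span hy))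
        have hwn : ‖-(c • y)‖ < ε₀ := by
          rw [norm_neg, norm_smul, Real.norm_eq_abs, abs_of_pos hc]
          have h1 : c * ‖y‖ < c * (‖y‖ + 1) := by
            apply mul_lt_mul_of_pos_left _ hc; linarith
          have h2 : c * (‖y‖ + 1) = ε₀ / 2 := by
            rw [hcdef]; field_simp
          linarith
        have hmem : t₀ + -(c • y) ∈ τ := hball _ hwmem hwn
        have h1 : 0 ≤ f (t₀ + -(c • y)) := hf0 _ (hτF hmem)
        rw [map_add, hft, map_neg, map_smul] at h1
        have h2 : f y ≤ 0 := by
          simp only [smul_eq_mul] at h1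
          nlinarith
        exact le_antisymm h2 (hf0 y (hτF hy))
      have hker : Submodule.span ℝ (insert m τ) ≤ LinearMap.ker f := by
        rw [Submodule.span_le]
        rintro y (rfl | hy)
        · exact hfm
        · exact hfτ y hy
      have hlt : Submodule.span ℝ τ < Submodule.span ℝ (insert m τ) := by
        refine lt_of_le_of_ne (Submodule.span_mono (Set.subset_insert m τ)) (fun h => hms ?_)
        rw [h]
        exact Submodule.subset_span (Set.mem_insert m τ)
      have hr1 : Module.finrank ℝ (Submodule.span ℝ τ) <
          Module.finrank ℝ (Submodule.span ℝ (insert m τ)) :=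
        Submodule.finrank_lt_finrank_of_lt hlt
      have hle2 : Submodule.span ℝ (insert m τ) ≤ Submodule.span ℝ F :=
        Submodule.span_mono (Set.insert_subset_iff.mpr ⟨hm2, hτF⟩)
      have hcd : coneDim τ + 1 = coneDim F := hface.2
      have heq : Submodule.span ℝ (insert m τ) = Submodule.span ℝ F := by
        apply Submodule.eq_of_le_of_finrank_le hle2
        unfold coneDim at hcd
        omega
      have : y₀ ∈ LinearMap.ker f := by
        apply hker
        rw [heq]
        exact Submodule.subset_span hy₀
      rw [LinearMap.mem_ker] at this
      linarith
    have hxlat : x ∈ latticeOf (𝓜.sg F) :=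
      ⟨p + t₀, 𝓜.sg_add F hFc p hp t₀ (hsgτF ht₀sg), q, hq, by rw [hx, hmpq]; abel⟩
    exact ⟨t₀, ht₀sg, (hsn F hFc x).mpr ⟨F, 𝓜.faceOf_self hFc, ⟨hxlat, hxint⟩⟩⟩

end MonoidalComplex

end Helpers5
section Helpers6

set_option linter.unusedSectionVars false
set_option linter.unusedVariables false

open Set

variable {V : Type} [NormedAddCommGroup V] [NormedSpace ℝ V] [FiniteDimensional ℝ V]
  {M : AddSubgroup V}

namespace MonoidalComplex

variable (𝓜 : MonoidalComplex V M)

lemma exists_facet_superset {σ : Set V} (hσ : σ ∈ 𝓜.cones) : ∃ F, 𝓜.IsFacet F ∧ σ ⊆ F := by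
  have hfin : {ρ | ρ ∈ 𝓜.cones ∧ σ ⊆ ρ}.Finite :=
    𝓜.cones_finite.subset (fun ρ hρ => hρ.1)
  obtain ⟨F, hF, hmax⟩ :=
    Set.Finite.exists_maximalFor id _ hfin ⟨σ, hσ, subset_rfl⟩
  refine ⟨F, ⟨hF.1, fun ρ hρ hFρ => ?_⟩, hF.2⟩
  exact Set.Subset.antisymm (hmax ⟨hρ, hF.2.trans hFρ⟩ hFρ) hFρ

lemma sInter_mem_cones {s : Set (Set V)} (hfin : s.Finite) (hsub : s ⊆ 𝓜.cones)
    (hne : s.Nonempty) : ⋂₀ s ∈ 𝓜.cones := by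
  refine Set.Finite.induction_on
    (motive := fun s _ => s ⊆ 𝓜.cones → s.Nonempty → ⋂₀ s ∈ 𝓜.cones) s hfin
    (fun _ h => absurd h (by simp)) ?_ hsub hne
  intro a s has hsfin ih hsub' hne'
  have ha : a ∈ 𝓜.cones := hsub' (Set.mem_insert a s)
  rcases s.eq_empty_or_nonempty with rfl | hsne
  · simpa using ha
  · have hs' : ⋂₀ s ∈ 𝓜.cones := ih (fun ρ hρ => hsub' (Set.mem_insert_of_mem a hρ)) hsne
    rw [Set.sInter_insert]
    exact 𝓜.face_mem a ha _ (𝓜.inter_face a ha _ hs')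

/-- Connectivity in codimension one, extracted from `S_2`: if there are at least two distinct
facets, every facet shares a codimension-one cone with a different facet. -/
lemma exists_shared_codim_one (k : Type) [Field k] (hS2 : 𝓜.IsS2 k) {F₀ F₁ F₂ : Set V}
    (hF₀ : 𝓜.IsFacet F₀) (hF₁ : 𝓜.IsFacet F₁) (hF₂ : 𝓜.IsFacet F₂) (hne : F₁ ≠ F₂) :
    ∃ τ F', 𝓜.IsCodimOneCone τ ∧ 𝓜.IsFacet F' ∧ F' ≠ F₀ ∧ τ ⊆ F₀ ∧ τ ⊆ F' := by
  classical
  by_contra hcon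
  push_neg at hcon
  set f : Set V → (V →₀ k) := fun G => if G = F₀ then Finsupp.single 0 1 else 0 with hf
  have hfval : ∀ G m, f G m ≠ 0 → m = 0 := by
    intro G m hm
    by_cases hG : G = F₀
    · rw [hf] at hm
      simp only [hG, if_pos rfl] at hm
      exact (Finsupp.single_apply_ne_zero.mp hm).1
    · rw [hf] at hm
      simp [hG] at hm
  have p1 : ∀ G, 𝓜.IsFacet G → ∀ m, f G m ≠ 0 → ∃ s ∈ 𝓜.sg G, ∃ t ∈ 𝓜.sg G, m = s - t := by
    intro G hG m hm
    rw [hfval G m hm]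
    exact ⟨0, 𝓜.sg_zero G hG.1, 0, 𝓜.sg_zero G hG.1, by simp⟩
  have p2 : ∀ τ, 𝓜.IsCodimOneCone τ → ∀ G, 𝓜.IsFacet G → τ ⊆ G →
      ∀ m, f G m ≠ 0 → ∃ s ∈ 𝓜.sg G, ∃ t ∈ 𝓜.sg τ, m = s - t := by
    intro τ hτ G hG hτG m hm
    rw [hfval G m hm]
    exact ⟨0, 𝓜.sg_zero G hG.1, 0, 𝓜.sg_zero τ hτ.1, by simp⟩
  have p3 : ∀ τ, 𝓜.IsCodimOneCone τ → ∀ G G', 𝓜.IsFacet G → 𝓜.IsFacet G' → τ ⊆ G → τ ⊆ G' →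
      ∀ m, (∃ s ∈ 𝓜.sg τ, ∃ t ∈ 𝓜.sg τ, m = s - t) → f G m = f G' m := by
    intro τ hτ G G' hG hG' hτG hτG' m _
    by_cases hG0 : G = F₀ <;> by_cases hG'0 : G' = F₀
    · rw [hG0, hG'0]
    · exact absurd hτG' (hcon τ G' hτ hG' hG'0 (hG0 ▸ hτG))
    · exact absurd hτG (hcon τ G hτ hG hG0 (hG'0 ▸ hτG'))
    · simp [hf, hG0, hG'0]
  obtain ⟨g, hgs, hg⟩ := hS2 f p1 p2 p3
  have e1 : g 0 = 1 := by
    have := (hg F₀ hF₀ 0).1 (𝓜.sg_zero F₀ hF₀.1)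
    rw [hf] at this
    simpa using this.symm
  have hF' : ∃ F', 𝓜.IsFacet F' ∧ F' ≠ F₀ := by
    by_cases h1 : F₁ = F₀
    · exact ⟨F₂, hF₂, fun h => hne (h1.trans h.symm)⟩
    · exact ⟨F₁, hF₁, h1⟩
  obtain ⟨F', hF'f, hF'ne⟩ := hF'
  have e2 : g 0 = 0 := by
    have := (hg F' hF'f 0).1 (𝓜.sg_zero F' hF'f.1)
    rw [hf] at this
    simp only [if_neg hF'ne] at this
    simpa using this.symm
  rw [e1] at e2
  exact one_ne_zero e2

end MonoidalComplex

end Helpers6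

/-- Let `X = Spec k[ℳ]` be seminormal and `S_2` and not normal, with
non-normal locus `C`. Then the core of `X` (the intersection of the irreducible components of
`C`) is a normal toric variety: combinatorially, for
`σ(Δ) = ⋂_{X_{τ_i} ⊆ C} τ_i` (intersection over codimension-one cones `τ_i` of `Δ` whose
subvarieties lie in `C`), one has `σ(Δ) ∈ Δ` and `S_{σ(Δ)} = Λ ∩ σ(Δ)`, where
`Λ = S_{σ(Δ)} - S_{σ(Δ)}`. -/
theorem stmt_10 {V : Type} [NormedAddCommGroup V] [NormedSpace ℝ V] [FiniteDimensional ℝ V]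
    {M : AddSubgroup V} (hM : IsLattice M) (k : Type) [Field k]
    (𝓜 : MonoidalComplex V M)
    (hsn : ∀ σ ∈ 𝓜.cones, ∀ m : V, m ∈ 𝓜.sg σ ↔ ∃ τ : Set V, IsFaceOf τ σ ∧
      m ∈ latticeOf (𝓜.sg τ) ∩ intrinsicInterior ℝ τ)
    (hS2 : 𝓜.IsS2 k)
    (hnotnormal : ∃ σ, 𝓜.NonNormalCone σ)
    (σΔ : Set V)
    (hσΔ : σΔ = ⋂₀ {τ : Set V | 𝓜.IsCodimOneCone τ ∧ 𝓜.NonNormalCone τ})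
    (SσΔ : Set V)
    (hSσΔ : SσΔ = {m : V | (∃ σ ∈ 𝓜.cones, m ∈ 𝓜.sg σ) ∧ m ∈ σΔ}) :
    σΔ ∈ 𝓜.cones ∧ SσΔ = latticeOf SσΔ ∩ σΔ := by
  classical
  obtain ⟨σ₀, hσ₀c, hσ₀cases⟩ := hnotnormal
  set T : Set (Set V) := {τ : Set V | 𝓜.IsCodimOneCone τ ∧ 𝓜.NonNormalCone τ} with hT
  -- The key step packaged: regularity in codimension one along normal codim-one cones.
  have hhard : ∀ τ G, 𝓜.IsCodimOneCone τ → 𝓜.IsFacet G → τ ⊆ G → ¬ 𝓜.NonNormalCone τ →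
      ∀ m, m ∈ latticeOf (𝓜.sg G) → m ∈ G →
        ∃ s ∈ 𝓜.sg G, ∃ t ∈ 𝓜.sg τ, m = s - t := by
    intro τ G hτ hG hτG hτnn m hm1 hm2
    have hτc : τ ∈ 𝓜.cones := hτ.1
    have huniq : ∀ G', 𝓜.IsFacet G' → τ ⊆ G' → G' = G := by
      intro G' hG' hτG'
      by_contra hne
      exact hτnn ⟨hτc, Or.inl ⟨G', G, hG', hG, hne, hτG', hτG⟩⟩
    obtain ⟨-, G₁, hG₁, hface₁⟩ := hτ
    have hG₁G : G₁ = G := huniq G₁ hG₁ hface₁.1.1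
    have hface : IsCodimOneFace τ G := hG₁G ▸ hface₁
    have hsub : latticeOf (𝓜.sg τ) ⊆ latticeOf (latticeOf (𝓜.sg G) ∩ τ) := by
      apply latticeOf_mono
      intro y hy
      exact ⟨mem_latticeOf_of_mem (𝓜.sg_zero G hG.1) (𝓜.sg_mono hτc hG.1 hτG hy),
        𝓜.sg_subset_cone hτc hy⟩
    have hnorm : latticeOf (𝓜.sg τ) = latticeOf (latticeOf (𝓜.sg G) ∩ τ) := by
      by_contra hne
      exact hτnn ⟨hτc, Or.inr ⟨G, hG, hτG, lt_of_le_of_ne hsub hne⟩⟩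
    obtain ⟨t, htτ, hmt⟩ := 𝓜.hard_step hsn hG.1 hτc hface hnorm hm1 hm2
    exact ⟨m + t, hmt, t, htτ, by abel⟩
  -- T is nonempty.
  have hTne : T.Nonempty := by
    rcases hσ₀cases with ⟨Fa, Fb, hFa, hFb, hab, hσa, hσb⟩ | ⟨F, hF, hσF, hstrict⟩
    · obtain ⟨τ, F', hτ, hF', hne', hτF, hτF'⟩ :=
        𝓜.exists_shared_codim_one k hS2 hFa hFa hFb hab
      exact ⟨τ, hτ, ⟨hτ.1, Or.inl ⟨Fa, F', hFa, hF', Ne.symm hne', hτF, hτF'⟩⟩⟩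
    · by_contra hTe
      rw [Set.not_nonempty_iff_eq_empty] at hTe
      have hTne' : ∀ τ, τ ∉ T := fun τ hτ => by rw [hTe] at hτ; exact hτ
      have huniqF : ∀ G, 𝓜.IsFacet G → G = F := by
        intro G hG
        by_contra hne
        obtain ⟨τ, F', hτ, hF', hne', hτF, hτF'⟩ :=
          𝓜.exists_shared_codim_one k hS2 hF hG hF hne
        exact hTne' τ ⟨hτ, ⟨hτ.1, Or.inl ⟨F, F', hF, hF', Ne.symm hne', hτF, hτF'⟩⟩⟩
      have hkey : ∀ a, a ∈ latticeOf (𝓜.sg F) → a ∈ σ₀ → a ∈ 𝓜.sg σ₀ := by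
        intro a ha1 ha2
        have haF : a ∈ F := hσF ha2
        set f : Set V → (V →₀ k) := fun _ => Finsupp.single a 1 with hfdef
        have p1 : ∀ G, 𝓜.IsFacet G → ∀ m, f G m ≠ 0 →
            ∃ s ∈ 𝓜.sg G, ∃ t ∈ 𝓜.sg G, m = s - t := by
          intro G hG m hm
          have hm0 : m = a := (Finsupp.single_apply_ne_zero.mp hm).1
          obtain ⟨s, hs, t, ht, hst⟩ := ha1
          rw [huniqF G hG, hm0]
          exact ⟨s, hs, t, ht, hst⟩
        have p2 : ∀ τ, 𝓜.IsCodimOneCone τ → ∀ G, 𝓜.IsFacet G → τ ⊆ G →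
            ∀ m, f G m ≠ 0 → ∃ s ∈ 𝓜.sg G, ∃ t ∈ 𝓜.sg τ, m = s - t := by
          intro τ hτ G hG hτG m hm
          have hm0 : m = a := (Finsupp.single_apply_ne_zero.mp hm).1
          have hGF : G = F := huniqF G hG
          subst hm0; subst hGF
          exact hhard τ G hτ hG hτG (fun hnn => hTne' τ ⟨hτ, hnn⟩) m ha1 haF
        have p3 : ∀ τ, 𝓜.IsCodimOneCone τ → ∀ G G', 𝓜.IsFacet G → 𝓜.IsFacet G' →
            τ ⊆ G → τ ⊆ G' → ∀ m, (∃ s ∈ 𝓜.sg τ, ∃ t ∈ 𝓜.sg τ, m = s - t) →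
            f G m = f G' m := fun _ _ _ _ _ _ _ _ _ _ => rfl
        obtain ⟨g, hgs, hg⟩ := hS2 f p1 p2 p3
        have haFsg : a ∈ 𝓜.sg F := by
          by_contra hna
          have := (hg F hF a).2 hna
          simp [hfdef] at this
        rw [𝓜.sg_eq_of_subset hσ₀c hF.1 hσF]
        exact ⟨haFsg, ha2⟩
      have hcontra : latticeOf (latticeOf (𝓜.sg F) ∩ σ₀) ⊆ latticeOf (𝓜.sg σ₀) := by
        rintro x ⟨a, ⟨ha1, ha2⟩, b, ⟨hb1, hb2⟩, rfl⟩
        exact sub_mem_latticeOf (hkey a ha1 ha2) (hkey b hb1 hb2)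
      exact hstrict.2 hcontra
  -- σΔ is a cone of the complex.
  have hTsub : T ⊆ 𝓜.cones := fun τ hτ => hτ.1.1
  have hTfin : T.Finite := 𝓜.cones_finite.subset hTsub
  have hσΔc : σΔ ∈ 𝓜.cones := by
    rw [hσΔ]
    exact 𝓜.sInter_mem_cones hTfin hTsub hTne
  -- σΔ is contained in every facet.
  have hσΔT : ∀ τ ∈ T, σΔ ⊆ τ := fun τ hτ => by
    rw [hσΔ]; exact Set.sInter_subset_of_mem hτ
  obtain ⟨τ₀, hτ₀⟩ := hTne
  obtain ⟨G₀, hG₀, hτ₀G₀'⟩ := hτ₀.1.2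
  have hτ₀G₀ : τ₀ ⊆ G₀ := hτ₀G₀'.1.1
  have hσΔfacet : ∀ G, 𝓜.IsFacet G → σΔ ⊆ G := by
    intro G hG
    by_cases huniq : ∀ G', 𝓜.IsFacet G' → G' = G
    · have hGG : G₀ = G := huniq G₀ hG₀
      exact (hσΔT τ₀ hτ₀).trans (hGG ▸ hτ₀G₀)
    · push_neg at huniq
      obtain ⟨G', hG', hne⟩ := huniq
      obtain ⟨τ, F', hτ, hF', hne', hτG, hτF'⟩ :=
        𝓜.exists_shared_codim_one k hS2 hG hG' hG hne
      have hτT : τ ∈ T := ⟨hτ, ⟨hτ.1, Or.inl ⟨G, F', hG, hF', Ne.symm hne', hτG, hτF'⟩⟩⟩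
      exact (hσΔT τ hτT).trans hτG
  -- SσΔ is the semigroup of σΔ.
  have hSeq : SσΔ = 𝓜.sg σΔ := by
    rw [hSσΔ]
    ext m
    constructor
    · rintro ⟨⟨σ, hσc, hmσ⟩, hmΔ⟩
      have hface1 : IsFaceOf (σ ∩ σΔ) σ := 𝓜.inter_face σ hσc σΔ hσΔc
      have hmem2 : m ∈ 𝓜.sg (σ ∩ σΔ) := by
        rw [𝓜.sg_face σ hσc _ hface1]
        exact ⟨hmσ, 𝓜.sg_subset_cone hσc hmσ, hmΔ⟩
      have hc2 : σ ∩ σΔ ∈ 𝓜.cones := 𝓜.face_mem σ hσc _ hface1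
      exact 𝓜.sg_mono hc2 hσΔc Set.inter_subset_right hmem2
    · intro hm
      exact ⟨⟨σΔ, hσΔc, hm⟩, 𝓜.sg_subset_cone hσΔc hm⟩
  refine ⟨hσΔc, ?_⟩
  rw [hSeq]
  apply Set.Subset.antisymm
  · intro m hm
    exact ⟨mem_latticeOf_of_mem (𝓜.sg_zero _ hσΔc) hm, 𝓜.sg_subset_cone hσΔc hm⟩
  · rintro m ⟨hmlat, hmΔ⟩
    set f : Set V → (V →₀ k) := fun _ => Finsupp.single m 1 with hfdef
    have p1 : ∀ G, 𝓜.IsFacet G → ∀ m', f G m' ≠ 0 →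
        ∃ s ∈ 𝓜.sg G, ∃ t ∈ 𝓜.sg G, m' = s - t := by
      intro G hG m' hm'
      have hm0 : m' = m := (Finsupp.single_apply_ne_zero.mp hm').1
      subst hm0
      obtain ⟨a, ha, b, hb, hab⟩ := hmlat
      have hsub : 𝓜.sg σΔ ⊆ 𝓜.sg G := 𝓜.sg_mono hσΔc hG.1 (hσΔfacet G hG)
      exact ⟨a, hsub ha, b, hsub hb, hab⟩
    have p2 : ∀ τ, 𝓜.IsCodimOneCone τ → ∀ G, 𝓜.IsFacet G → τ ⊆ G →
        ∀ m', f G m' ≠ 0 → ∃ s ∈ 𝓜.sg G, ∃ t ∈ 𝓜.sg τ, m' = s - t := by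
      intro τ hτ G hG hτG m' hm'
      have hm0 : m' = m := (Finsupp.single_apply_ne_zero.mp hm').1
      subst hm0
      by_cases hnn : 𝓜.NonNormalCone τ
      · have hστ : σΔ ⊆ τ := hσΔT τ ⟨hτ, hnn⟩
        obtain ⟨a, ha, b, hb, hab⟩ := hmlat
        exact ⟨a, 𝓜.sg_mono hσΔc hG.1 (hσΔfacet G hG) ha, b,
          𝓜.sg_mono hσΔc hτ.1 hστ hb, hab⟩
      · exact hhard τ G hτ hG hτG hnn m'
          (latticeOf_mono (𝓜.sg_mono hσΔc hG.1 (hσΔfacet G hG)) hmlat)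
          (hσΔfacet G hG hmΔ)
    have p3 : ∀ τ, 𝓜.IsCodimOneCone τ → ∀ G G', 𝓜.IsFacet G → 𝓜.IsFacet G' →
        τ ⊆ G → τ ⊆ G' → ∀ m', (∃ s ∈ 𝓜.sg τ, ∃ t ∈ 𝓜.sg τ, m' = s - t) →
        f G m' = f G' m' := fun _ _ _ _ _ _ _ _ _ _ => rfl
    obtain ⟨g, hgs, hg⟩ := hS2 f p1 p2 p3
    have hmG₀ : m ∈ 𝓜.sg G₀ := by
      by_contra hna
      have := (hg G₀ hG₀ m).2 hna
      simp [hfdef] at this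
    rw [𝓜.sg_eq_of_subset hσΔc hG₀.1 (hσΔfacet G₀ hG₀)]
    exact ⟨hmG₀, hmΔ⟩
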